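/- arXiv:2102.12551 — 5 statements merged into one kernel-verified Lean document; each statement's English description precedes it below -/
import Mathlib

section
/- Theory subsumption implies entailment: for clausal theories T₁ and T₂, if T₁ ⪯ T₂ then T₁ ⊨ T₂, i.e., every L-structure satisfying (the universal closure of the disjunction of the literals of) every clause of T₁ also satisfies every clause of T₂. -/
open FirstOrder FirstOrder.Language

/-- A literal: a signed (positive or negative) atomic `L`-formula, given by a relation
symbol applied to terms with free variables in `V`. -/
structure Lit (L : Language) (V : Type*) where
  pos : Bool
  n : ℕ
  rel : L.Relations n
  args : Fin n → L.Term V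

noncomputable instance {L : Language} {V : Type*} : DecidableEq (Lit L V) :=
  Classical.decEq _

/-- Apply a substitution `θ` (a map from variables to `L`-terms) to a literal. -/
def Lit.subst {L : Language} {V : Type*} (l : Lit L V) (θ : V → L.Term V) : Lit L V :=
  ⟨l.pos, l.n, l.rel, fun i => (l.args i).subst θ⟩

/-- Realization (truth) of a literal in structure `M` under valuation `v`. -/
def Lit.Realize {L : Language} {V : Type*} (M : Type*) [L.Structure M]
    (l : Lit L V) (v : V → M) : Prop :=
  if l.pos then Structure.RelMap l.rel (fun i => (l.args i).realize v)
  else ¬ Structure.RelMap l.rel (fun i => (l.args i).realize v)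

/-- A clause: a finite set of literals. -/
abbrev Clause (L : Language) (V : Type*) := Finset (Lit L V)

/-- Clause `C₁` subsumes clause `C₂` iff there is a substitution `θ` with `C₁θ ⊆ C₂`. -/
def Clause.Subsumes {L : Language} {V : Type*} (C₁ C₂ : Clause L V) : Prop :=
  ∃ θ : V → L.Term V, ∀ l ∈ C₁, l.subst θ ∈ C₂

/-- Semantics of a clause: the universal closure of the disjunction of its literals. -/
def Clause.Realize {L : Language} {V : Type*} (M : Type*) [L.Structure M]
    (C : Clause L V) : Prop :=
  ∀ v : V → M, ∃ l ∈ C, l.Realize M v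

/-- Theory subsumption `T₁ ⪯ T₂`: every clause of `T₂` is subsumed by some clause of `T₁`. -/
def TheorySubsumes {L : Language} {V : Type*} (T₁ T₂ : Finset (Clause L V)) : Prop :=
  ∀ C₂ ∈ T₂, ∃ C₁ ∈ T₁, Clause.Subsumes C₁ C₂

/-- `M` is a model of a set of clauses `S`. -/
def Models {L : Language} {V : Type*} (M : Type*) [L.Structure M]
    (S : Set (Clause L V)) : Prop :=
  ∀ C ∈ S, Clause.Realize M C

/-- A ground atom: a relation symbol applied to variable-free terms. -/
structure GAtom (L : Language) where
  n : ℕ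
  rel : L.Relations n
  args : Fin n → L.Term Empty

/-- Truth of a ground atom in a structure. -/
def GAtom.Realize {L : Language} (M : Type*) [L.Structure M] (e : GAtom L) : Prop :=
  Structure.RelMap e.rel fun i => (e.args i).realize (Empty.elim : Empty → M)

/-- A set of clauses `S` entails a ground atom `e`: every model of `S` satisfies `e`. -/
def Entails {L : Language} {V : Type*} (S : Set (Clause L V)) (e : GAtom L) : Prop :=
  ∀ (M : Type*) [L.Structure M], Models M S → GAtom.Realize M e

/-- `P` is a sub-program of `Q` (programs are finite multisets of clauses). -/
inductive SubProgram {L : Language} {V : Type*} :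
    Multiset (Clause L V) → Multiset (Clause L V) → Prop
  | empty (Q : Multiset (Clause L V)) : SubProgram 0 Q
  | step {P Q : Multiset (Clause L V)} {Cp Cq : Clause L V} :
      Cp ∈ P → Cq ∈ Q → Cp ⊆ Cq →
      SubProgram (P.erase Cp) (Q.erase Cq) → SubProgram P Q

/-- A set of clauses `S` entails a sentence `e`: every model of `S` satisfies `e`. -/
def EntailsSentence {L : Language} {V : Type*} (S : Set (Clause L V))
    (e : L.Sentence) : Prop :=
  ∀ (M : Type*) [L.Structure M], Models M S → M ⊨ e

/-- Theory subsumption implies entailment: if `T₁ ⪯ T₂` then every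
`L`-structure satisfying every clause of `T₁` also satisfies every clause of `T₂`. -/
theorem theory_subsumes_implies_entails {L : Language} {V : Type*}
    (T₁ T₂ : Finset (Clause L V)) (h : TheorySubsumes T₁ T₂) :
    ∀ (M : Type*) [L.Structure M],
      (∀ C ∈ T₁, Clause.Realize M C) → ∀ C ∈ T₂, Clause.Realize M C := by
  intro M _ hM C₂ hC₂ v
  obtain ⟨C₁, hC₁, θ, hsub⟩ := h C₂ hC₂
  obtain ⟨l, hl, hlr⟩ := hM C₁ hC₁ (fun x => (θ x).realize v)
  refine ⟨l.subst θ, hsub l hl, ?_⟩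
  have key : ∀ i, ((l.subst θ).args i).realize v
      = (l.args i).realize (fun x => (θ x).realize v) := fun i => by
    simp [Lit.subst, Term.realize_subst]
  unfold Lit.Realize at *
  simp only [Lit.subst] at *
  simpa [funext key] using hlr
end

section
/- Missing answers propagate to specialisations: if a ground atom e⁺ is a missing answer of a hypothesis H given background knowledge B (i.e., B ∪ H ⊭ e⁺), then e⁺ is a missing answer of every specialisation H′ of H (i.e., for every clausal theory H′ with H ⪯ H′, B ∪ H′ ⊭ e⁺). -/
open FirstOrder FirstOrder.Language

/-- Missing answers propagate to specialisations: if `B ∪ H ⊭ e⁺` then for every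
specialisation `H'` of `H` (i.e. `H ⪯ H'`), `B ∪ H' ⊭ e⁺`. -/
theorem missing_answer_propagates {L : Language} {V : Type*}
    (B : Set (Clause L V)) (H : Finset (Clause L V)) (e : GAtom L)
    (hmiss : ¬ Entails (B ∪ ↑H) e) :
    ∀ H' : Finset (Clause L V), TheorySubsumes H H' → ¬ Entails (B ∪ ↑H') e := by
  intro H' hsub hent
  apply hmiss
  intro M _ hM
  apply hent M
  intro C hC
  rcases hC with hB | hH'
  · exact hM C (Or.inl hB)
  · obtain ⟨C₁, hC₁, θ, hθ⟩ := hsub C hH'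
    intro v
    obtain ⟨l, hl, hlr⟩ := hM C₁ (Or.inr hC₁) (fun x => (θ x).realize v)
    refine ⟨l.subst θ, hθ l hl, ?_⟩
    unfold Lit.Realize Lit.subst at *
    simpa [Term.realize_subst] using hlr
end

section
/- Soundness of specialisation constraints: if a hypothesis H is incomplete with respect to positive examples E⁺ and background knowledge B (i.e., there exists e⁺ ∈ E⁺ with B ∪ H ⊭ e⁺), then no specialisation H′ of H (i.e., no clausal theory H′ with H ⪯ H′) is a solution, where a solution is a hypothesis that is complete (∀e ∈ E⁺, B ∪ H′ ⊨ e) and consistent (∀e ∈ E⁻, B ∪ H′ ⊭ e). -/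
open FirstOrder FirstOrder.Language

/-- Soundness of specialisation constraints: if `H` is incomplete
(some `e⁺ ∈ E⁺` has `B ∪ H ⊭ e⁺`), then no specialisation `H'` of `H` is a solution. -/
theorem specialisation_constraint_sound {L : Language} {V : Type*}
    (B : Set (Clause L V)) (Epos Eneg : Set (GAtom L)) (H : Finset (Clause L V))
    (hincomplete : ∃ e ∈ Epos, ¬ Entails (B ∪ ↑H) e) :
    ∀ H' : Finset (Clause L V), TheorySubsumes H H' →
      ¬ ((∀ e ∈ Epos, Entails (B ∪ ↑H') e) ∧ (∀ e ∈ Eneg, ¬ Entails (B ∪ ↑H') e)) := by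
  rintro H' hsub ⟨hcomp, _⟩
  obtain ⟨e, he, hne⟩ := hincomplete
  apply hne
  intro M _ hM
  apply hcomp e he M
  intro C hC
  rcases hC with hB | hH'
  · exact hM C (Or.inl hB)
  · obtain ⟨C₁, hC₁, θ, hθ⟩ := hsub C hH'
    intro v
    obtain ⟨l, hl, hlr⟩ := hM C₁ (Or.inr hC₁) (fun x => (θ x).realize v)
    refine ⟨l.subst θ, hθ l hl, ?_⟩
    simpa [Lit.Realize, Lit.subst, Term.realize_subst] using hlr
end

section
/- Soundness of generalisation constraints: if a hypothesis H is inconsistent with respect to negative examples E⁻ and background knowledge B (i.e., there exists e⁻ ∈ E⁻ with B ∪ H ⊨ e⁻), then no generalisation G of H (i.e., no clausal theory G with G ⪯ H) is a solution, where a solution is a hypothesis that is complete (∀e ∈ E⁺, B ∪ G ⊨ e) and consistent (∀e ∈ E⁻, B ∪ G ⊭ e). -/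
open FirstOrder FirstOrder.Language

/-- Soundness of generalisation constraints: if `H` is inconsistent
(some `e⁻ ∈ E⁻` has `B ∪ H ⊨ e⁻`), then no generalisation `G` of `H` is a solution. -/
theorem generalisation_constraint_sound {L : Language} {V : Type*}
    (B : Set (Clause L V)) (Epos Eneg : Set (GAtom L)) (H : Finset (Clause L V))
    (hinconsistent : ∃ e ∈ Eneg, Entails (B ∪ ↑H) e) :
    ∀ G : Finset (Clause L V), TheorySubsumes G H →
      ¬ ((∀ e ∈ Epos, Entails (B ∪ ↑G) e) ∧ (∀ e ∈ Eneg, ¬ Entails (B ∪ ↑G) e)) := by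
  obtain ⟨e, heE, hent⟩ := hinconsistent
  rintro G hsub ⟨-, hcons⟩
  apply hcons e heE
  intro M _ hM
  apply hent M
  intro C hC
  rcases hC with hB | hH
  · exact hM C (Or.inl hB)
  · obtain ⟨C₁, hC₁G, θ, hθ⟩ := hsub C hH
    intro v
    obtain ⟨l, hl, hlr⟩ := hM C₁ (Or.inr hC₁G) (fun x => (θ x).realize v)
    refine ⟨l.subst θ, hθ l hl, ?_⟩
    unfold Lit.Realize Lit.subst at *
    simpa [Term.realize_subst] using hlr
end

section
/- A failing sub-program yields sound pruning: if P is a clausal theory that is incomplete (some e⁺ ∈ E⁺ has B ∪ P ⊭ e⁺), then no specialisation of P is a solution; and if P is inconsistent (some e⁻ ∈ E⁻ has B ∪ P ⊨ e⁻), then no generalisation of P is a solution. Hence for any failing clausal theory P (incomplete or inconsistent), every program pruned as a specialisation of an incomplete P or as a generalisation of an inconsistent P is not a solution. -/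
open FirstOrder FirstOrder.Language

lemma Lit.realize_subst {L : Language} {V : Type*} {M : Type*} [L.Structure M]
    (l : Lit L V) (θ : V → L.Term V) (v : V → M) :
    (l.subst θ).Realize M v ↔ l.Realize M (fun x => (θ x).realize v) := by
  unfold Lit.Realize Lit.subst
  simp [Term.realize_subst]

lemma models_of_subsumes {L : Language} {V : Type*} {M : Type*} [L.Structure M]
    {B : Set (Clause L V)} {T₁ T₂ : Finset (Clause L V)}
    (h : TheorySubsumes T₁ T₂) (hM : Models M (B ∪ ↑T₁)) : Models M (B ∪ ↑T₂) := by
  intro C hC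
  rcases hC with hC | hC
  · exact hM C (Or.inl hC)
  · obtain ⟨C₁, hC₁, θ, hθ⟩ := h C hC
    intro v
    obtain ⟨l, hl, hlr⟩ := hM C₁ (Or.inr hC₁) (fun x => (θ x).realize v)
    exact ⟨l.subst θ, hθ l hl, (Lit.realize_subst l θ v).mpr hlr⟩

/-- A failing sub-program yields sound pruning: if `P` is incomplete then no
specialisation of `P` is a solution, and if `P` is inconsistent then no generalisation of `P`
is a solution. -/
theorem failing_subprogram_sound_pruning {L : Language} {V : Type*}
    (B : Set (Clause L V)) (Epos Eneg : Set (GAtom L)) (P : Finset (Clause L V)) :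
    ((∃ e ∈ Epos, ¬ Entails (B ∪ ↑P) e) →
      ∀ H' : Finset (Clause L V), TheorySubsumes P H' →
        ¬ ((∀ e ∈ Epos, Entails (B ∪ ↑H') e) ∧ (∀ e ∈ Eneg, ¬ Entails (B ∪ ↑H') e))) ∧
    ((∃ e ∈ Eneg, Entails (B ∪ ↑P) e) →
      ∀ G : Finset (Clause L V), TheorySubsumes G P →
        ¬ ((∀ e ∈ Epos, Entails (B ∪ ↑G) e) ∧ (∀ e ∈ Eneg, ¬ Entails (B ∪ ↑G) e))) := by
  constructor
  · rintro ⟨e, he, hne⟩ H' hsub ⟨hcomp, _⟩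
    exact hne fun M _ hM => hcomp e he M (models_of_subsumes hsub hM)
  · rintro ⟨e, he, hent⟩ G hsub ⟨_, hcons⟩
    exact hcons e he fun M _ hM => hent M (models_of_subsumes hsub hM)
end
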